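/- Let t ≥ 2, let s ∈ [0, t−2], and let h be an odd multiple of 2^s. Let {K_a : a ∈ {0,1}^u, u ≤ t} be a nested family of pairwise disjoint (per level) nondegenerate closed subintervals of [0,1] with the 2-adic cyclic addition structure, and for a ∈ {0,1}^s let a_*, a_∘, a^∘, a^* denote the four children a00, a01, a10, a11 ordered so that K_{a_*} < K_{a_∘} < K_{a^∘} < K_{a^*}. Define ε_s = max_{a∈{0,1}^s} dist(K_{a_*}, K_{a^*}) and dist_∞(K_b, K_c) = max_{i≥0} dist(K_{b+i}, K_{c+i}) (with indices in ℤ/2^tℤ under 2-adic encoding). Then dist_∞(K_b, K_{b+h}) ≥ ε_s for every b ∈ {0,1}^t. -/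

import Mathlib

open Filter Metric Set
open scoped Classical

namespace RQA

variable {X : Type*} [MetricSpace X]

/-- Correlation sum `C_m(x,n,ε)` with respect to the Bowen metric `ρ_m`:
`ρ_m(f^[i] x, f^[j] x) ≤ ε ↔ ∀ k < m, dist (f^[i+k] x) (f^[j+k] x) ≤ ε`. -/
noncomputable def corrSum (f : X → X) (x : X) (m n : ℕ) (ε : ℝ) : ℝ :=
  (((Finset.range n ×ˢ Finset.range n).filter
      (fun p => ∀ k < m, dist (f^[p.1 + k] x) (f^[p.2 + k] x) ≤ ε)).card : ℝ) / (n : ℝ) ^ 2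

/-- Correlation sum `C_∞(x,n,ε)` with respect to the metric `ρ_∞`. -/
noncomputable def corrSumInf (f : X → X) (x : X) (n : ℕ) (ε : ℝ) : ℝ :=
  (((Finset.range n ×ˢ Finset.range n).filter
      (fun p => ∀ k : ℕ, dist (f^[p.1 + k] x) (f^[p.2 + k] x) ≤ ε)).card : ℝ) / (n : ℝ) ^ 2

/-- Lower asymptotic correlation sum `C̲_m(x,ε)`. -/
noncomputable def lowerCorr (f : X → X) (x : X) (m : ℕ) (ε : ℝ) : ℝ :=
  liminf (fun n => corrSum f x m n ε) atTop

/-- Upper asymptotic correlation sum `C̄_m(x,ε)`. -/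
noncomputable def upperCorr (f : X → X) (x : X) (m : ℕ) (ε : ℝ) : ℝ :=
  limsup (fun n => corrSum f x m n ε) atTop

/-- Recurrence `m`-determinism `DET_m(x,n,ε) = C_m(x,n,ε)/C_1(x,n,ε)`. -/
noncomputable def detSum (f : X → X) (x : X) (m n : ℕ) (ε : ℝ) : ℝ :=
  corrSum f x m n ε / corrSum f x 1 n ε

/-- Recurrence `∞`-determinism `DET_∞(x,n,ε) = C_∞(x,n,ε)/C_1(x,n,ε)`. -/
noncomputable def detSumInf (f : X → X) (x : X) (n : ℕ) (ε : ℝ) : ℝ :=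
  corrSumInf f x n ε / corrSum f x 1 n ε

/-- Lower asymptotic recurrence determinism `DET̲_m(x,ε)`. -/
noncomputable def lowerDet (f : X → X) (x : X) (m : ℕ) (ε : ℝ) : ℝ :=
  liminf (fun n => detSum f x m n ε) atTop

/-- Upper asymptotic recurrence determinism `DET̄_m(x,ε)`. -/
noncomputable def upperDet (f : X → X) (x : X) (m : ℕ) (ε : ℝ) : ℝ :=
  limsup (fun n => detSum f x m n ε) atTop

/-- `C̄_∞(x,ε) = lim_m C̄_m(x,ε)`; since `m ↦ C̄_m(x,ε)` is non-increasing,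
the limit equals the infimum over `m ≥ 1`. -/
noncomputable def upperCorrInf (f : X → X) (x : X) (ε : ℝ) : ℝ :=
  ⨅ m : ℕ, upperCorr f x (m + 1) ε

/-- `C̲_∞(x,ε) = lim_m C̲_m(x,ε)` (a limit of a non-increasing sequence). -/
noncomputable def lowerCorrInf (f : X → X) (x : X) (ε : ℝ) : ℝ :=
  ⨅ m : ℕ, lowerCorr f x (m + 1) ε

/-- `DET̄_∞(x,ε) = lim_m DET̄_m(x,ε)` (a limit of a non-increasing sequence). -/
noncomputable def upperDetInf (f : X → X) (x : X) (ε : ℝ) : ℝ :=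
  ⨅ m : ℕ, upperDet f x (m + 1) ε

/-- `DET̲_∞(x,ε) = lim_m DET̲_m(x,ε)` (a limit of a non-increasing sequence). -/
noncomputable def lowerDetInf (f : X → X) (x : X) (ε : ℝ) : ℝ :=
  ⨅ m : ℕ, lowerDet f x (m + 1) ε

/-- The ω-limit set of `x`: the set of limit points of the trajectory `(f^[n] x)`. -/
def omegaSet (f : X → X) (x : X) : Set X :=
  {y | ∃ φ : ℕ → ℕ, StrictMono φ ∧ Tendsto (fun n => f^[φ n] x) atTop (nhds y)}

/-- Distance between two subsets of `ℝ`. -/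
noncomputable def setDist (A B : Set ℝ) : ℝ :=
  sInf {d | ∃ a ∈ A, ∃ b ∈ B, d = dist a b}

/-- The binary word of length `t` given by the binary digits of `n`
(the 2-adic encoding, least significant digit first; addition of integers to
words is addition with carry from left to right, i.e. ordinary addition of the
encoded values modulo `2^t`). -/
def word (t n : ℕ) : Fin t → Bool := fun i => n.testBit i.val

/-- The value `∑ w_i 2^i` of a binary word under the 2-adic encoding. -/
def encodeWord {t : ℕ} (w : Fin t → Bool) : ℕ :=
  ∑ i : Fin t, if w i then 2 ^ i.val else 0

end RQA

open RQA


lemma enc_lt (f : ℕ → Bool) : ∀ s, (∑ i ∈ Finset.range s, if f i then 2^i else 0) < 2^s := by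
  intro s
  induction s with
  | zero => simp
  | succ m ih =>
    rw [Finset.sum_range_succ]
    have h1 : (if f m then 2^m else 0) ≤ 2^m := by split <;> simp
    have h2 : 2^(m+1) = 2^m + 2^m := by ring
    omega

lemma enc_testBit (f : ℕ → Bool) : ∀ s i, i < s →
    (∑ k ∈ Finset.range s, if f k then 2^k else 0).testBit i = f i := by
  intro s
  induction s with
  | zero => omega
  | succ m ih =>
    intro i hi
    rw [Finset.sum_range_succ]
    set S := ∑ k ∈ Finset.range m, if f k then 2^k else 0 with hS
    have hSlt : S < 2^m := enc_lt f m
    rcases Nat.lt_or_ge i m with him | him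
    · have hmod : (S + (if f m then 2^m else 0)) % 2^m = S := by
        split
        · rw [Nat.add_mod_right]; exact Nat.mod_eq_of_lt hSlt
        · rw [Nat.add_zero]; exact Nat.mod_eq_of_lt hSlt
      have h2 := Nat.testBit_mod_two_pow (S + (if f m then 2^m else 0)) m i
      rw [hmod] at h2
      simp only [him, decide_true, Bool.true_and] at h2
      rw [← h2]; exact ih i him
    · have him' : i = m := by omega
      subst him'
      rw [Nat.testBit_eq_decide_div_mod_eq]
      have hpos : 0 < 2^i := Nat.pow_pos (by norm_num)
      split
      · rename_i hfm
        rw [Nat.add_div_right S hpos, Nat.div_eq_of_lt hSlt, hfm]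
        norm_num
      · rename_i hfm
        rw [Nat.add_zero, Nat.div_eq_of_lt hSlt]
        simp [Bool.not_eq_true] at hfm
        rw [hfm]; norm_num

lemma combo : ∀ p q d0 d3 : Fin 4, q.val % 2 = 1 → d0.val % 2 ≠ d3.val % 2 →
    ∃ k : Fin 4, ((p.val + k.val) % 4 = d0.val ∧ (p.val + q.val + k.val) % 4 = d3.val) ∨
      ((p.val + k.val) % 4 = d3.val ∧ (p.val + q.val + k.val) % 4 = d0.val) := by decide

lemma setDist_comm' (A B : Set ℝ) : setDist A B = setDist B A := by
  unfold setDist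
  congr 1
  ext d
  constructor
  · rintro ⟨a, ha, b, hb, rfl⟩; exact ⟨b, hb, a, ha, dist_comm a b⟩
  · rintro ⟨b, hb, a, ha, rfl⟩; exact ⟨a, ha, b, hb, dist_comm b a⟩

lemma setDist_anti {A B A' B' : Set ℝ} (hA : A' ⊆ A) (hB : B' ⊆ B)
    (hA' : A'.Nonempty) (hB' : B'.Nonempty) : setDist A B ≤ setDist A' B' := by
  apply csInf_le_csInf
  · exact ⟨0, by rintro d ⟨a, _, b, _, rfl⟩; exact dist_nonneg⟩
  · obtain ⟨a, ha⟩ := hA'; obtain ⟨b, hb⟩ := hB'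
    exact ⟨_, a, ha, b, hb, rfl⟩
  · rintro d ⟨a, ha, b, hb, rfl⟩; exact ⟨a, hA ha, b, hB hb, rfl⟩


/-- if `h` is an odd multiple of `2^s` (`s ≤ t−2`), then
`dist_∞(K_b, K_{b+h}) ≥ ε_s` for every `b ∈ {0,1}^t`; since
`dist_∞(K_b,K_c) = sup_{i≥0} dist(K_{b+i},K_{c+i})`, the conclusion is stated as
the existence of some shift `i` with `dist(K_{b+i},K_{b+h+i}) ≥ ε_s`. Words are
identified with residues mod `2^t` via the 2-adic encoding (`word t n`). The
four children `a00,a01,a10,a11` of `a ∈ {0,1}^s`, ordered from left to right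
as subintervals, are given by `ch a 0 = a_*, ch a 1 = a_∘, ch a 2 = a^∘,
ch a 3 = a^*`, and `ε_s = max_a dist(K_{a_*}, K_{a^*})`. -/
theorem stmt_15 (t s : ℕ) (ht : 2 ≤ t) (hs : s + 2 ≤ t)
    (K : ∀ u : ℕ, (Fin u → Bool) → Set ℝ)
    (hK : ∀ u, u ≤ t → ∀ a : Fin u → Bool,
      ∃ y z : ℝ, y < z ∧ 0 ≤ y ∧ z ≤ 1 ∧ K u a = Icc y z)
    (hnest : ∀ (u u' : ℕ) (huu' : u ≤ u'), u' ≤ t → ∀ b : Fin u' → Bool,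
      K u' b ⊆ K u (fun i => b (Fin.castLE huu' i)))
    (hdisj : ∀ u, u ≤ t → ∀ a b : Fin u → Bool, a ≠ b → Disjoint (K u a) (K u b))
    (ch : (Fin s → Bool) → Fin 4 → (Fin (s + 2) → Bool))
    (hch_ext : ∀ (a : Fin s → Bool) (k : Fin 4) (i : Fin s),
      ch a k (Fin.castLE (by omega) i) = a i)
    (hch_all : ∀ (a : Fin s → Bool) (w : Fin (s + 2) → Bool),
      (∀ i : Fin s, w (Fin.castLE (by omega) i) = a i) → ∃ k : Fin 4, w = ch a k)
    (hch_ord : ∀ (a : Fin s → Bool) (k l : Fin 4), k < l →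
      ∀ u ∈ K (s + 2) (ch a k), ∀ v ∈ K (s + 2) (ch a l), u < v)
    (εs : ℝ)
    (hεs : IsGreatest
      (Set.range fun a : Fin s → Bool =>
        setDist (K (s + 2) (ch a 0)) (K (s + 2) (ch a 3))) εs)
    (h j : ℕ) (hj : Odd j) (hh : h = j * 2 ^ s) :
    ∀ n : ℕ, ∃ i : ℕ,
      εs ≤ setDist (K t (word t (n + i))) (K t (word t (n + h + i))) := by
  intro n
  have hs1 : s < s + 2 := by omega
  have hs2 : s + 1 < s + 2 := by omega
  set sfin : Fin (s + 2) := ⟨s, hs1⟩ with hsfin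
  set sfin' : Fin (s + 2) := ⟨s + 1, hs2⟩ with hsfin'
  obtain ⟨a, ha⟩ := hεs.1
  -- nonemptiness of every K
  have hne : ∀ u (hu : u ≤ t) (w : Fin u → Bool), (K u w).Nonempty := by
    intro u hu w
    obtain ⟨y, z, hyz, _, _, hKw⟩ := hK u hu w
    exact ⟨y, by rw [hKw]; exact ⟨le_refl y, hyz.le⟩⟩
  -- injectivity of ch a
  have hchinj : ∀ k l : Fin 4, ch a k = ch a l → k = l := by
    intro k l hkl
    by_contra hkl'
    rcases Ne.lt_or_gt hkl' with hlt | hlt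
    · obtain ⟨u, hu⟩ := hne (s+2) hs (ch a k)
      have := hch_ord a k l hlt u hu u (by rw [← hkl]; exact hu)
      exact lt_irrefl u this
    · obtain ⟨u, hu⟩ := hne (s+2) hs (ch a k)
      have := hch_ord a l k hlt u (by rw [← hkl]; exact hu) u hu
      exact lt_irrefl u this
  -- the parity fact : bit s of ch a 0 differs from bit s of ch a 3
  have hneq : ch a 0 sfin ≠ ch a 3 sfin := by
    intro heq
    -- find a middle child with the other bit at position s
    have hmid : ∃ m : Fin 4, 0 < m ∧ m < 3 ∧ ch a m sfin ≠ ch a 0 sfin := by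
      by_contra hcon
      push_neg at hcon
      have h1 := hcon 1 (by decide) (by decide)
      have h2 := hcon 2 (by decide) (by decide)
      have hball : ∀ k : Fin 4, ch a k sfin = ch a 0 sfin := by
        intro k
        fin_cases k
        · rfl
        · exact h1
        · exact h2
        · exact heq.symm
      set w : Fin (s+2) → Bool := Function.update (ch a 0) sfin (!(ch a 0 sfin)) with hw
      obtain ⟨k, hk⟩ := hch_all a w (by
        intro i
        have hiv : (Fin.castLE (by omega : s ≤ s + 2) i) ≠ sfin := by
          intro hcc
          have : (i : ℕ) = s := congrArg Fin.val hcc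
          omega
        rw [hw, Function.update_of_ne hiv]
        exact hch_ext a 0 i)
      have hws : w sfin = ch a k sfin := by rw [hk]
      rw [hw, Function.update_self, hball k] at hws
      simp at hws
    obtain ⟨m, hm0, hm3, hmne⟩ := hmid
    -- restrictions to level s+1
    set r0 : Fin (s+1) → Bool := fun i => ch a 0 (Fin.castLE (by omega) i) with hr0
    set rm : Fin (s+1) → Bool := fun i => ch a m (Fin.castLE (by omega) i) with hrm
    have hres3 : (fun i : Fin (s+1) => ch a 3 (Fin.castLE (by omega : s + 1 ≤ s + 2) i)) = r0 := by
      funext i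
      show ch a 3 (Fin.castLE (by omega : s + 1 ≤ s + 2) i)
          = ch a 0 (Fin.castLE (by omega : s + 1 ≤ s + 2) i)
      rcases Nat.lt_or_ge i.val s with hi | hi
      · have hieq : (Fin.castLE (by omega : s + 1 ≤ s + 2) i)
            = Fin.castLE (by omega : s ≤ s + 2) (⟨i.val, hi⟩ : Fin s) := Fin.ext rfl
        rw [hieq, hch_ext a 3 ⟨i.val, hi⟩, hch_ext a 0 ⟨i.val, hi⟩]
      · have hieq : (Fin.castLE (by omega : s + 1 ≤ s + 2) i) = sfin := by
          apply Fin.ext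
          have := i.isLt
          simp only [Fin.coe_castLE]
          show (i : ℕ) = s
          omega
        rw [hieq, heq]
    have hr0ne : r0 ≠ rm := by
      intro hcc
      apply hmne
      have h9 : ch a 0 (Fin.castLE (by omega : s + 1 ≤ s + 2) (⟨s, by omega⟩ : Fin (s+1)))
          = ch a m (Fin.castLE (by omega : s + 1 ≤ s + 2) (⟨s, by omega⟩ : Fin (s+1))) :=
        congrFun hcc (⟨s, by omega⟩ : Fin (s+1))
      have hcast : (Fin.castLE (by omega : s + 1 ≤ s + 2) (⟨s, by omega⟩ : Fin (s+1))) = sfin :=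
        Fin.ext rfl
      rw [hcast] at h9
      exact h9.symm
    have hd := hdisj (s+1) (by omega) r0 rm hr0ne
    obtain ⟨u, hu⟩ := hne (s+2) hs (ch a 0)
    obtain ⟨x, hx⟩ := hne (s+2) hs (ch a m)
    obtain ⟨v, hv⟩ := hne (s+2) hs (ch a 3)
    have hux : u < x := hch_ord a 0 m hm0 u hu x hx
    have hxv : x < v := hch_ord a m 3 hm3 x hx v hv
    have hu1 : u ∈ K (s+1) r0 := hnest (s+1) (s+2) (by omega) hs (ch a 0) hu
    have hx1 : x ∈ K (s+1) rm := hnest (s+1) (s+2) (by omega) hs (ch a m) hx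
    have hv1 : v ∈ K (s+1) r0 := by
      have := hnest (s+1) (s+2) (by omega) hs (ch a 3) hv
      rwa [hres3] at this
    obtain ⟨y, z, hyz, _, _, hK1⟩ := hK (s+1) (by omega) r0
    rw [hK1] at hu1 hv1
    have hx0 : x ∈ K (s+1) r0 := by
      rw [hK1]
      exact ⟨le_trans hu1.1 hux.le, le_trans hxv.le hv1.2⟩
    exact Set.disjoint_left.mp hd hx0 hx1
  -- encode a as a natural number
  set f : ℕ → Bool := fun i => if hi : i < s then a ⟨i, hi⟩ else false with hf
  set e : ℕ := ∑ i ∈ Finset.range s, if f i then 2^i else 0 with he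
  have helt : e < 2^s := enc_lt f s
  set P : ℕ := 2^s with hP
  have hPpos : 0 < P := Nat.pow_pos (by norm_num)
  set i0 : ℕ := e + P - n % P with hi0
  have hrlt : n % P < P := Nat.mod_lt n hPpos
  -- the bit-pattern values of the two extreme children
  set D : Fin 4 → ℕ := fun kk =>
    (if ch a kk sfin then 1 else 0) + 2 * (if ch a kk sfin' then 1 else 0) with hD
  have hDlt : ∀ kk, D kk < 4 := by
    intro kk; rw [hD]; dsimp only; split <;> split <;> norm_num
  have hDpar : D 0 % 2 ≠ D 3 % 2 := by
    rw [hD]; dsimp only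
    cases hb0 : ch a 0 sfin <;> cases hb3 : ch a 3 sfin <;>
      cases hc0 : ch a 0 sfin' <;> cases hc3 : ch a 3 sfin' <;>
      first
        | exact absurd (hb0.trans hb3.symm) hneq
        | (norm_num)
  -- the key cylinder lemma
  have key : ∀ (m : ℕ) (kk : Fin 4), m % P = e → (m / P) % 4 = D kk →
      (fun i : Fin (s+2) => word t m (Fin.castLE hs i)) = ch a kk := by
    intro m kk hmod hdiv
    funext i
    show m.testBit i.val = ch a kk i
    have hts : ∀ c, m.testBit (s + c) = (m / P).testBit c := by
      intro c
      rw [← Nat.testBit_shiftRight, Nat.shiftRight_eq_div_pow, hP]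
    rcases Nat.lt_or_ge i.val s with hi | hi
    · have e3 : ch a kk i = a ⟨i.val, hi⟩ := by
        have hieq : i = Fin.castLE (by omega : s ≤ s + 2) (⟨i.val, hi⟩ : Fin s) :=
          Fin.ext rfl
        have h7 := hch_ext a kk ⟨i.val, hi⟩
        rwa [← hieq] at h7
      have e1 : m.testBit i.val = e.testBit i.val := by
        rw [← hmod, hP, Nat.testBit_mod_two_pow]
        simp [hi]
      have e2 : e.testBit i.val = a ⟨i.val, hi⟩ := by
        rw [he, enc_testBit f s i.val hi, hf]
        simp [hi]
      rw [e1, e2, e3]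
    · have hi2 := i.isLt
      rcases Nat.lt_or_ge i.val (s+1) with hi' | hi'
      · -- i.val = s
        have hieq : i = sfin := by apply Fin.ext; show i.val = s; omega
        rw [hieq]
        show m.testBit s = ch a kk sfin
        have h0 : m.testBit s = (m / P).testBit 0 := by
          have := hts 0; simpa using this
        rw [h0, Nat.testBit_eq_decide_div_mod_eq]
        rw [hD] at hdiv; dsimp only at hdiv
        cases hb : ch a kk sfin <;> cases hb' : ch a kk sfin' <;>
          rw [hb, hb'] at hdiv <;> norm_num at hdiv ⊢ <;> omega
      · -- i.val = s + 1
        have hieq : i = sfin' := by apply Fin.ext; show i.val = s + 1; omega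
        rw [hieq]
        show m.testBit (s + 1) = ch a kk sfin'
        rw [hts 1, Nat.testBit_eq_decide_div_mod_eq]
        rw [hD] at hdiv; dsimp only at hdiv
        cases hb : ch a kk sfin <;> cases hb' : ch a kk sfin' <;>
          rw [hb, hb'] at hdiv <;> norm_num at hdiv ⊢ <;> omega
    -- choose k from the combinatorial lemma
  set p0 : ℕ := (n + i0) / P with hp0
  have hj2 : j % 4 % 2 = 1 := by
    have := Nat.odd_iff.mp hj
    omega
  obtain ⟨k, hk⟩ := combo ⟨p0 % 4, Nat.mod_lt _ (by norm_num)⟩ ⟨j % 4, Nat.mod_lt _ (by norm_num)⟩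
    ⟨D 0, hDlt 0⟩ ⟨D 3, hDlt 3⟩ hj2 hDpar
  simp only [Fin.val_mk] at hk
  refine ⟨i0 + k.val * P, ?_⟩
  set x : ℕ := n + (i0 + k.val * P) with hx
  set y : ℕ := n + h + (i0 + k.val * P) with hy
  -- arithmetic facts
  have hxm : x % P = e := by
    rw [hx, ← Nat.add_assoc, Nat.add_mul_mod_self_right, ← Nat.mod_add_mod]
    have h1 : n % P + i0 = e + P := by rw [hi0]; omega
    rw [h1, Nat.add_mod_right]
    exact Nat.mod_eq_of_lt helt
  have hxd : x / P = p0 + k.val := by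
    rw [hx, ← Nat.add_assoc, Nat.add_mul_div_right _ _ hPpos, hp0]
  have hyx : y = x + j * P := by rw [hy, hx, hh, hP]; ring
  have hym : y % P = e := by rw [hyx, Nat.add_mul_mod_self_right]; exact hxm
  have hyd : y / P = p0 + k.val + j := by
    rw [hyx, Nat.add_mul_div_right _ _ hPpos, hxd]
  -- distribute the two cases
  have hsub : ∀ (m : ℕ) (kk : Fin 4), m % P = e → (m / P) % 4 = D kk →
      K t (word t m) ⊆ K (s+2) (ch a kk) := by
    intro m kk h1 h2
    have h5 := hnest (s+2) t hs (le_refl t) (word t m)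
    rwa [key m kk h1 h2] at h5
  have hnex : (K t (word t x)).Nonempty := hne t (le_refl t) _
  have hney : (K t (word t y)).Nonempty := hne t (le_refl t) _
  rcases hk with ⟨hk1, hk2⟩ | ⟨hk1, hk2⟩
  · have hx4 : (x / P) % 4 = D 0 := by rw [hxd]; omega
    have hy4 : (y / P) % 4 = D 3 := by rw [hyd]; omega
    calc εs = setDist (K (s + 2) (ch a 0)) (K (s + 2) (ch a 3)) := ha.symm
      _ ≤ setDist (K t (word t x)) (K t (word t y)) :=
        setDist_anti (hsub x 0 hxm hx4) (hsub y 3 hym hy4) hnex hney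
  · have hx4 : (x / P) % 4 = D 3 := by rw [hxd]; omega
    have hy4 : (y / P) % 4 = D 0 := by rw [hyd]; omega
    calc εs = setDist (K (s + 2) (ch a 0)) (K (s + 2) (ch a 3)) := ha.symm
      _ = setDist (K (s + 2) (ch a 3)) (K (s + 2) (ch a 0)) := setDist_comm' _ _
      _ ≤ setDist (K t (word t x)) (K t (word t y)) :=
        setDist_anti (hsub x 3 hxm hx4) (hsub y 0 hym hy4) hnex hney
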